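/- Let B be a commutative ring and let f be a polynomial in B[X] such that, in the polynomial ring B[X,Y], one has f(X+Y) = f(X) + f(Y) and f(X·Y) = f(X)·f(Y), and such that f(1) = 1. If the B-algebra endomorphism of B[X] determined by X ↦ f is bijective, then f = X. (Equivalently: every automorphism of the affine line over B as a ring scheme is the identity.) -/

import Mathlib

open Polynomial

/-- Every automorphism of the affine line over `B` as a ring scheme is the identity:
if `f ∈ B[X]` satisfies `f(X+Y) = f(X) + f(Y)`, `f(X·Y) = f(X)·f(Y)` and `f(1) = 1`,
and the `B`-algebra endomorphism `X ↦ f` of `B[X]` is bijective, then `f = X`. -/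
theorem stmt_0 (B : Type*) [CommRing B] (f : B[X])
    (hadd : Polynomial.aeval ((MvPolynomial.X 0 : MvPolynomial (Fin 2) B) + MvPolynomial.X 1) f
      = Polynomial.aeval (MvPolynomial.X 0 : MvPolynomial (Fin 2) B) f
        + Polynomial.aeval (MvPolynomial.X 1 : MvPolynomial (Fin 2) B) f)
    (hmul : Polynomial.aeval ((MvPolynomial.X 0 : MvPolynomial (Fin 2) B) * MvPolynomial.X 1) f
      = Polynomial.aeval (MvPolynomial.X 0 : MvPolynomial (Fin 2) B) f
        * Polynomial.aeval (MvPolynomial.X 1 : MvPolynomial (Fin 2) B) f)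
    (hone : Polynomial.eval (1 : B) f = 1)
    (hbij : Function.Bijective (Polynomial.aeval f : B[X] →ₐ[B] B[X])) :
    f = Polynomial.X := by
  -- specialize `hmul` to `B[X][X]` with `X₀ ↦ C X`, `X₁ ↦ X`
  have h : Polynomial.aeval ((Polynomial.C Polynomial.X : B[X][X]) * Polynomial.X) f
      = (Polynomial.C f) * f.map Polynomial.C := by
    have hB : Polynomial.aeval (Polynomial.C Polynomial.X : B[X][X]) f = Polynomial.C f := by
      simpa [Polynomial.CAlgHom] using
        Polynomial.aeval_algHom_apply (Polynomial.CAlgHom (R := B) (A := B[X])) Polynomial.X f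
    have hC : Polynomial.aeval (Polynomial.X : B[X][X]) f = f.map Polynomial.C := by
      simpa [Polynomial.CAlgHom] using Polynomial.aeval_algHom_apply
        (Polynomial.mapAlgHom (Polynomial.CAlgHom (R := B) (A := B))) Polynomial.X f
    have := congrArg
      (MvPolynomial.aeval (R := B) ![(Polynomial.C Polynomial.X : B[X][X]), Polynomial.X]) hmul
    simpa [← Polynomial.aeval_algHom_apply, hB, hC] using this
  -- coefficientwise relations: the coefficients are orthogonal idempotents
  have key : ∀ k l, f.coeff l * f.coeff k = if k = l then f.coeff k else 0 := by
    intro k l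
    rw [Polynomial.aeval_eq_sum_range] at h
    have h2 := congrArg (fun p => (Polynomial.coeff (Polynomial.coeff p k) l)) h
    simp only [Polynomial.finset_sum_coeff, Polynomial.coeff_smul, mul_pow, ← Polynomial.C_pow,
      Polynomial.coeff_C_mul, Polynomial.coeff_X_pow, Polynomial.coeff_map, Polynomial.coeff_mul_C,
      smul_eq_mul, mul_ite, mul_one, mul_zero, apply_ite, Polynomial.coeff_zero, smul_zero] at h2
    simp only [apply_ite (fun (p : B[X]) => p.coeff l), Polynomial.coeff_zero] at h2
    rw [Finset.sum_ite_eq] at h2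
    rw [← h2]
    by_cases hk : k ∈ Finset.range (f.natDegree + 1)
    · simp only [hk, if_true, Polynomial.coeff_smul, Polynomial.coeff_X_pow, smul_eq_mul, mul_ite,
        mul_one, mul_zero]
      simp [eq_comm]
    · have hk0 : f.coeff k = 0 := by
        apply Polynomial.coeff_eq_zero_of_natDegree_lt
        simpa using hk
      simp [hk, hk0]
  -- all coefficients except the linear one vanish
  have hz : ∀ n, n ≠ 1 → f.coeff n = 0 := by
    intro n hn
    obtain ⟨g, hg⟩ := hbij.2 Polynomial.X
    set e := f.coeff n with he
    set I := Ideal.span {(1 : B) - e} with hI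
    set π := Ideal.Quotient.mk I with hπ
    have hπe : π e = 1 := by
      have : π ((1 : B) - e) = 0 := Ideal.Quotient.eq_zero_iff_mem.mpr
        (Ideal.subset_span (Set.mem_singleton _))
      have := sub_eq_zero.mp (by simpa [map_sub] using this)
      simpa using this.symm
    have hfmap : f.map π = Polynomial.X ^ n := by
      ext m
      rw [Polynomial.coeff_map, Polynomial.coeff_X_pow]
      rcases eq_or_ne m n with rfl | hmn
      · rw [if_pos rfl]; exact hπe
      · have : f.coeff m * f.coeff n = 0 := by
          rw [key n m, if_neg (fun hh => hmn hh.symm)]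
        have : π (f.coeff m) * π e = 0 := by rw [← map_mul, he, this, map_zero]
        rw [hπe, mul_one] at this
        rw [this, if_neg hmn]
    -- push `hg` to the quotient
    have h1 : Polynomial.eval₂ Polynomial.C (Polynomial.X ^ n) (g.map π) = Polynomial.X := by
      have h0 := congrArg (Polynomial.mapRingHom π) hg
      rw [Polynomial.aeval_def, Polynomial.hom_eval₂] at h0
      have hcomp : (Polynomial.mapRingHom π).comp (algebraMap B B[X])
          = (Polynomial.C : (B ⧸ I) →+* (B ⧸ I)[X]).comp π := by
        ext b; simp
      rw [hcomp, ← Polynomial.eval₂_map, Polynomial.coe_mapRingHom, hfmap] at h0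
      simpa using h0
    have h2 : (1 : B ⧸ I) = 0 := by
      have := congrArg (fun p => Polynomial.coeff p 1) h1
      rw [Polynomial.eval₂_eq_sum_range] at this
      simp only [Polynomial.finset_sum_coeff, ← pow_mul, Polynomial.coeff_C_mul,
        Polynomial.coeff_X_pow, Polynomial.coeff_X, mul_ite, mul_one, mul_zero] at this
      rw [Finset.sum_eq_zero] at this
      · exact this.symm ▸ rfl
      · intro i _
        rw [if_neg]
        intro hni
        exact hn (Nat.eq_one_of_mul_eq_one_right hni.symm)
    have hmem : (1 : B) ∈ I := by
      rw [← Ideal.Quotient.eq_zero_iff_mem]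
      simpa using h2
    obtain ⟨a, ha⟩ := Ideal.mem_span_singleton'.mp (hI ▸ hmem)
    have hee : e * e = e := by simpa using key n n
    calc e = e * (a * (1 - e)) := by rw [ha, mul_one]
    _ = a * (e - e * e) := by ring
    _ = 0 := by rw [hee, sub_self, mul_zero]
  -- the linear coefficient is `1`
  have hc1 : f.coeff 1 = 1 := by
    rw [Polynomial.eval_eq_sum_range] at hone
    rw [Finset.sum_eq_single 1 (fun b _ hb => by simp [hz b hb])
      (fun h1 => by
        rw [Finset.mem_range, not_lt] at h1
        have h2 : f.coeff 1 = 0 := Polynomial.coeff_eq_zero_of_natDegree_lt (by omega)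
        simp [h2])] at hone
    simpa using hone
  ext m
  rcases eq_or_ne m 1 with rfl | hm
  · simp [hc1]
  · simp [hz m hm, Polynomial.coeff_X, Ne.symm hm]
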